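/- arXiv:2104.12202 — 2 statements merged into one kernel-verified Lean document; each statement's English description precedes it below -/
import Mathlib

section
/- Let f : Fin 3 × Fin 3 → Fin 3 × Fin 3 be as follows (first component a color 0 = NIL, 1 = RED, 2 = BLUE; second a position 0 = C, 1 = C', 2 = C''): f(0,0) = (1,1), f(1,1) = (2,2), f(2,2) = (2,1), f(2,1) = (0,0), and f(s) = s otherwise. Let σ : ℕ → Bool be any schedule with σ(n) = true for infinitely many n (fairness: the moving robot is activated infinitely often), and define the run s : ℕ → Fin 3 × Fin 3 by s(0) = (0,0) and s(n+1) = f(s(n)) if σ(n) = true, s(n+1) = s(n) otherwise. Then for every n, s(n) = f^[k](0,0) where k is the number of indices m < n with σ(m) = true; consequently the position component of the run attains each of the values 0, 1, 2 at infinitely many times n, in the cyclic order 0, 1, 2, 1, 0, 1, 2, 1, … of its changes. -/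
/-- The state-transition function of robot `z` in Algorithm AlgOC:
first component a color (0 = NIL, 1 = RED, 2 = BLUE),
second component a position (0 = C, 1 = C', 2 = C''). -/
def algOCStep : Fin 3 × Fin 3 → Fin 3 × Fin 3 := fun s =>
  if s = (0, 0) then (1, 1)
  else if s = (1, 1) then (2, 2)
  else if s = (2, 2) then (2, 1)
  else if s = (2, 1) then (0, 0)
  else s

/-- Under any fair schedule `σ` (true at infinitely many steps), the asynchronous run
of Algorithm AlgOC started at `(NIL, C)` equals the `k`-th iterate of `algOCStep`
where `k` counts the activations so far; consequently the position component attains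
each of the values 0, 1, 2 at infinitely many times, in the cyclic order
0, 1, 2, 1, 0, 1, 2, 1, … of its changes. -/
theorem algOC_async_run (σ : ℕ → Bool)
    (hfair : ∀ N : ℕ, ∃ n : ℕ, N ≤ n ∧ σ n = true)
    (s : ℕ → Fin 3 × Fin 3)
    (h0 : s 0 = (0, 0))
    (hstep : ∀ n : ℕ, s (n + 1) = if σ n = true then algOCStep (s n) else s n) :
    (∀ n : ℕ,
      s n = algOCStep^[((Finset.range n).filter (fun m => σ m = true)).card] (0, 0)) ∧
    (∀ n : ℕ,
      (s n).2 =
        if ((Finset.range n).filter (fun m => σ m = true)).card % 4 = 0 then 0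
        else if ((Finset.range n).filter (fun m => σ m = true)).card % 4 = 2 then 2
        else 1) ∧
    (∀ v : Fin 3, ∀ N : ℕ, ∃ n : ℕ, N ≤ n ∧ (s n).2 = v) := by
  set c : ℕ → ℕ := fun n => ((Finset.range n).filter (fun m => σ m = true)).card with hc
  have hcsucc : ∀ n, c (n + 1) = if σ n = true then c n + 1 else c n := by
    intro n
    by_cases h : σ n = true <;>
      simp [hc, Finset.range_add_one, Finset.filter_insert, h,
        Finset.card_insert_of_notMem, Finset.mem_filter]
  have hcmono : Monotone c := by
    intro a b hab
    exact Finset.card_le_card (Finset.filter_subset_filter _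
      (Finset.range_subset_range.mpr hab))
  -- 4-periodicity of the iterates
  have hiter : ∀ k : ℕ, algOCStep^[k] ((0 : Fin 3), (0 : Fin 3)) =
      if k % 4 = 0 then (0, 0) else if k % 4 = 1 then (1, 1)
      else if k % 4 = 2 then (2, 2) else (2, 1) := by
    intro k
    induction k with
    | zero => simp
    | succ k ih =>
      rw [Function.iterate_succ_apply', ih]
      have h4 : k % 4 = 0 ∨ k % 4 = 1 ∨ k % 4 = 2 ∨ k % 4 = 3 := by omega
      rcases h4 with h | h | h | h
      · have h' : (k + 1) % 4 = 1 := by omega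
        simp only [h, h']; decide
      · have h' : (k + 1) % 4 = 2 := by omega
        simp only [h, h']; decide
      · have h' : (k + 1) % 4 = 3 := by omega
        simp only [h, h']; decide
      · have h' : (k + 1) % 4 = 0 := by omega
        simp only [h, h']; decide
  -- Part 1
  have part1 : ∀ n, s n = algOCStep^[c n] (0, 0) := by
    intro n
    induction n with
    | zero => simpa [hc] using h0
    | succ n ih =>
      rw [hstep n, hcsucc n, ih]
      by_cases h : σ n = true <;> simp [h, Function.iterate_succ_apply']
  -- Part 2
  have part2 : ∀ n, (s n).2 =
      if c n % 4 = 0 then 0 else if c n % 4 = 2 then 2 else 1 := by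
    intro n
    rw [part1 n, hiter]
    have h4 : c n % 4 = 0 ∨ c n % 4 = 1 ∨ c n % 4 = 2 ∨ c n % 4 = 3 := by omega
    rcases h4 with h | h | h | h <;> simp [h]
  refine ⟨part1, part2, ?_⟩
  -- unboundedness of c
  have hunbdd : ∀ K : ℕ, ∃ n, K ≤ c n := by
    intro K
    induction K with
    | zero => exact ⟨0, Nat.zero_le _⟩
    | succ K ih =>
      obtain ⟨n, hn⟩ := ih
      obtain ⟨m, hm, hσ⟩ := hfair n
      refine ⟨m + 1, ?_⟩
      rw [hcsucc m, if_pos hσ]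
      exact Nat.succ_le_succ (hn.trans (hcmono hm))
  -- c hits every value
  have hsurj : ∀ K : ℕ, ∃ n, c n = K := by
    intro K
    obtain ⟨n, hn⟩ := hunbdd K
    clear hfair
    induction n with
    | zero =>
      refine ⟨0, ?_⟩
      have : c 0 = 0 := by simp [hc]
      omega
    | succ n ih =>
      by_cases h : K ≤ c n
      · exact ih h
      · refine ⟨n + 1, ?_⟩
        have := hcsucc n
        by_cases hσ : σ n = true <;> simp [hσ] at this <;> omega
  intro v N
  -- choose the residue corresponding to v
  have key : ∀ r : ℕ, r < 4 → ∃ n, N ≤ n ∧ c n % 4 = r := by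
    intro r hr
    obtain ⟨n, hn⟩ := hsurj (4 * (c N + 1) + r)
    refine ⟨n, ?_, ?_⟩
    · by_contra hlt
      push_neg at hlt
      have := hcmono (Nat.le_of_lt hlt)
      omega
    · omega
  fin_cases v
  · obtain ⟨n, hn, hr⟩ := key 0 (by norm_num)
    exact ⟨n, hn, by rw [part2 n, hr]; simp⟩
  · obtain ⟨n, hn, hr⟩ := key 1 (by norm_num)
    exact ⟨n, hn, by rw [part2 n, hr]; simp⟩
  · obtain ⟨n, hn, hr⟩ := key 2 (by norm_num)
    exact ⟨n, hn, by rw [part2 n, hr]; simp⟩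
end

section
/- Let f : Bool × ℝ → Bool × ℝ be given by f(false, d) = (true, 2d) and f(true, d) = (false, d/2). Fix x₁ > 0 and x₂ > 0, let σ : ℕ → Set (Fin 2) be any schedule such that each i ∈ Fin 2 belongs to σ(n) for infinitely many n, and define runs s_i : ℕ → Bool × ℝ for i ∈ Fin 2 by s_i(0) = (false, x_i) and s_i(n+1) = f(s_i(n)) if i ∈ σ(n), s_i(n+1) = s_i(n) otherwise. Write d_i(n) for the second component of s_i(n). Then for each i ∈ Fin 2 there exists a strictly increasing sequence t : ℕ → ℕ such that for all k: d_i(t(2k)) = x_i, d_i(t(2k+1)) = 2x_i, d_i is monotone nondecreasing on the interval [t(2k), t(2k+1)], and d_i is monotone nonincreasing on the interval [t(2k+1), t(2k+2)]. -/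
/-- The state-transition function of a terminal robot in Algorithm AlgoIOP:
first component the internal light (false = NIL, true = RED),
second component the distance to the middle robot. -/
noncomputable def algoIOPStep : Bool × ℝ → Bool × ℝ := fun s =>
  match s with
  | (false, d) => (true, 2 * d)
  | (true, d) => (false, d / 2)

lemma algoIOPStep_fst (p : Bool × ℝ) : (algoIOPStep p).1 = !p.1 := by
  rcases p with ⟨b, d⟩; cases b <;> rfl

/-- Algorithm AlgoIOP solves the Independent Oscillating Problem in `FSTA`
under every fair schedule: each terminal robot's distance to the middle robot
oscillates between `x i` and `2 * x i` with the required monotonicity. -/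
theorem algoIOP_solves_IOP (x : Fin 2 → ℝ) (hx : ∀ i, 0 < x i)
    (σ : ℕ → Set (Fin 2))
    (hfair : ∀ (i : Fin 2) (N : ℕ), ∃ n : ℕ, N ≤ n ∧ i ∈ σ n)
    (s : Fin 2 → ℕ → Bool × ℝ)
    (h0 : ∀ i, s i 0 = (false, x i))
    (hact : ∀ i n, i ∈ σ n → s i (n + 1) = algoIOPStep (s i n))
    (hidle : ∀ i n, i ∉ σ n → s i (n + 1) = s i n) :
    ∀ i : Fin 2, ∃ t : ℕ → ℕ, StrictMono t ∧
      ∀ k : ℕ,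
        (s i (t (2 * k))).2 = x i ∧
        (s i (t (2 * k + 1))).2 = 2 * x i ∧
        MonotoneOn (fun n => (s i n).2) (Set.Icc (t (2 * k)) (t (2 * k + 1))) ∧
        AntitoneOn (fun n => (s i n).2) (Set.Icc (t (2 * k + 1)) (t (2 * k + 2))) := by
  intro i
  -- invariant
  have inv : ∀ n, s i n = (false, x i) ∨ s i n = (true, 2 * x i) := by
    intro n
    induction n with
    | zero => exact Or.inl (h0 i)
    | succ n ih =>
      by_cases hmem : i ∈ σ n
      · rcases ih with h | h
        · right; rw [hact i n hmem, h]; rfl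
        · left; rw [hact i n hmem, h]
          show ((false, 2 * x i / 2) : Bool × ℝ) = _
          norm_num
      · rw [hidle i n hmem]; exact ih
  have dle : ∀ n, (s i n).2 ≤ 2 * x i := by
    intro n; rcases inv n with h | h <;> rw [h] <;> simp <;> linarith [hx i]
  have dfalse : ∀ n, (s i n).1 = false → (s i n).2 = x i := by
    intro n h
    rcases inv n with h' | h'
    · rw [h']
    · rw [h'] at h; simp at h
  have dtrue : ∀ n, (s i n).1 = true → (s i n).2 = 2 * x i := by
    intro n h
    rcases inv n with h' | h'
    · rw [h'] at h; simp at h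
    · rw [h']
  -- existence of a flip after any time
  have key : ∀ m : ℕ, ∃ n, m < n ∧ (s i n).1 = !(s i m).1 := by
    intro m
    obtain ⟨k, hk, hmem⟩ := hfair i m
    by_cases hlk : (s i k).1 = (s i m).1
    · refine ⟨k + 1, by omega, ?_⟩
      rw [hact i k hmem, algoIOPStep_fst, hlk]
    · refine ⟨k, ?_, ?_⟩
      · rcases lt_or_eq_of_le hk with h | h
        · exact h
        · exact absurd (by rw [h]) hlk
      · cases hb : (s i m).1 <;> cases hb' : (s i k).1 <;>
          simp_all
  classical
  let next : ℕ → ℕ := fun m => Nat.find (key m)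
  have hnext_lt : ∀ m, m < next m := fun m => (Nat.find_spec (key m)).1
  have hnext_flip : ∀ m, (s i (next m)).1 = !(s i m).1 :=
    fun m => (Nat.find_spec (key m)).2
  have hnext_min : ∀ m n, m ≤ n → n < next m → (s i n).1 = (s i m).1 := by
    intro m n hmn hn
    rcases lt_or_eq_of_le hmn with h | h
    · have := Nat.find_min (key m) hn
      push_neg at this
      have := this h
      cases hb : (s i m).1 <;> cases hb' : (s i n).1 <;> simp_all
    · rw [← h]
  set t : ℕ → ℕ := fun k => next^[k] 0 with ht
  have htsucc : ∀ k, t (k + 1) = next (t k) := by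
    intro k; simp [ht, Function.iterate_succ_apply']
  have hmono : StrictMono t :=
    strictMono_nat_of_lt_succ (fun k => by rw [htsucc]; exact hnext_lt _)
  -- lights at even/odd t
  have hlight : ∀ k, (s i (t (2 * k))).1 = false ∧ (s i (t (2 * k + 1))).1 = true := by
    intro k
    induction k with
    | zero =>
      have h00 : (s i (t 0)).1 = false := by
        show (s i (next^[0] 0)).1 = false
        simp [h0 i]
      refine ⟨h00, ?_⟩
      rw [htsucc, hnext_flip, h00]; rfl
    | succ k ih =>
      have h1 : 2 * (k + 1) = (2 * k + 1) + 1 := by ring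
      have h2 : (s i (t (2 * (k + 1)))).1 = false := by
        rw [h1, htsucc, hnext_flip, ih.2]; rfl
      refine ⟨h2, ?_⟩
      rw [htsucc, hnext_flip, h2]; rfl
  refine ⟨t, hmono, fun k => ?_⟩
  obtain ⟨hle, hlo⟩ := hlight k
  have hd0 : (s i (t (2 * k))).2 = x i := dfalse _ hle
  have hd1 : (s i (t (2 * k + 1))).2 = 2 * x i := dtrue _ hlo
  refine ⟨hd0, hd1, ?_, ?_⟩
  · -- monotone on [t(2k), t(2k+1)]
    intro a ha b hb hab
    rcases lt_or_eq_of_le hb.2 with h | h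
    · have hda : (s i a).2 = x i := by
        apply dfalse
        rw [htsucc] at h
        rw [hnext_min (t (2 * k)) a ha.1 (lt_of_le_of_lt hab h), hle]
      have hdb : (s i b).2 = x i := by
        apply dfalse
        rw [htsucc] at h
        rw [hnext_min (t (2 * k)) b hb.1 h, hle]
      simp [hda, hdb]
    · show (s i a).2 ≤ (s i b).2
      rw [h, hd1]; exact dle a
  · -- antitone on [t(2k+1), t(2k+2)]
    intro a ha b hb hab
    show (s i b).2 ≤ (s i a).2
    rcases lt_or_eq_of_le ha.2 with h | h
    · have hda : (s i a).2 = 2 * x i := by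
        apply dtrue
        have h22 : 2 * k + 2 = (2 * k + 1) + 1 := by ring
        rw [h22, htsucc] at h
        rw [hnext_min (t (2 * k + 1)) a ha.1 h, hlo]
      rw [hda]; exact dle b
    · have hab' : b = t (2 * k + 2) := le_antisymm hb.2 (h ▸ hab)
      rw [hab', ← h]
end
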